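/- Let F = E △ M where E ∈ 𝔄⊗̂𝔅 (the (P×Q)-completion of the product σ-algebra) and M ∈ M* is a nil set. Then ∫_Y P̂(F^y) dQ̂(y) = (P⊗̂Q)(E) = ∫_X Q̂(F_x) dP̂(x). In particular, the formula R_★(F) := (P×Q)(E) gives a well-defined extension of the completed product measure to the σ-algebra 𝔄★𝔅 generated by (𝔄⊗𝔅) ∪ M*, and R_★(F) equals both the iterated integral of the y-section measures and of the x-section measures. -/

import Mathlib

open MeasureTheory Set
open scoped symmDiff ENNReal

/-- The σ-ideal `M*` of nil sets. -/
def nilStar {X Y : Type*} [MeasurableSpace X] [MeasurableSpace Y]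
    (P : Measure X) (Q : Measure Y) : Set (Set (X × Y)) :=
  {E | (∃ N : Set X, MeasurableSet N ∧ P N = 0 ∧ ∀ x ∉ N, Q {y | (x, y) ∈ E} = 0) ∧
       (∃ M : Set Y, MeasurableSet M ∧ Q M = 0 ∧ ∀ y ∉ M, P {x | (x, y) ∈ E} = 0)}

/-- if `F = E ∆ M` with `E ∈ 𝔄⊗̂𝔅` (the `(P×Q)`-completion) and
`M ∈ M*`, then `∫_Y P̂(F^y) dQ̂(y) = (P⊗̂Q)(E) = ∫_X Q̂(F_x) dP̂(x)`; in particular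
`R_★(F) := (P×Q)(E)` is well defined on `𝔄★𝔅` and equals both iterated
section integrals. -/
theorem Rbigstar_eq_iterated_sections {X Y : Type*} [MeasurableSpace X] [MeasurableSpace Y]
    (P : Measure X) (Q : Measure Y) [IsProbabilityMeasure P] [IsProbabilityMeasure Q]
    (hP : P.IsComplete) (hQ : Q.IsComplete)
    (E M F : Set (X × Y)) (hE : NullMeasurableSet E (P.prod Q))
    (hM : M ∈ nilStar P Q) (hF : F = E ∆ M) :
    (∫⁻ y, P {x | (x, y) ∈ F} ∂Q) = (P.prod Q) E ∧
    (P.prod Q) E = ∫⁻ x, Q {y | (x, y) ∈ F} ∂P := by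
  obtain ⟨⟨N, hNm, hN0, hNx⟩, ⟨L, hLm, hL0, hLy⟩⟩ := hM
  obtain ⟨E', hE'sub, hE'm, hE'ae⟩ := hE.exists_measurable_subset_ae_eq
  have hEE'0 : (P.prod Q) (E ∆ E') = 0 :=
    measure_symmDiff_eq_zero_iff.mpr hE'ae.symm
  have hEeq : (P.prod Q) E = (P.prod Q) E' := measure_congr hE'ae.symm
  have hFE : F ∆ E = M := by
    rw [hF, symmDiff_comm E M, symmDiff_symmDiff_cancel_right]
  have hFE' : F ∆ E' ⊆ M ∪ (E ∆ E') := by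
    calc F ∆ E' ⊆ (F ∆ E) ∪ (E ∆ E') := symmDiff_triangle F E E'
    _ = M ∪ (E ∆ E') := by rw [hFE]
  -- x-sections
  have hx : ∀ᵐ x ∂P, Q {y | (x, y) ∈ F} = Q (Prod.mk x ⁻¹' E') := by
    have h1 := Measure.measure_ae_null_of_prod_null hEE'0
    have h2 : ∀ᵐ x ∂P, x ∉ N := measure_eq_zero_iff_ae_notMem.mp hN0
    filter_upwards [h1, h2] with x h1x h2x
    have hsub : Prod.mk x ⁻¹' (F ∆ E') ⊆ (Prod.mk x ⁻¹' M) ∪ (Prod.mk x ⁻¹' (E ∆ E')) := by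
      intro y hy
      rcases hFE' hy with h | h
      · exact Or.inl h
      · exact Or.inr h
    have h0 : Q (Prod.mk x ⁻¹' (F ∆ E')) = 0 := by
      refine le_antisymm ?_ (zero_le)
      calc Q (Prod.mk x ⁻¹' (F ∆ E')) ≤ Q ((Prod.mk x ⁻¹' M) ∪ (Prod.mk x ⁻¹' (E ∆ E'))) :=
            measure_mono hsub
      _ ≤ Q (Prod.mk x ⁻¹' M) + Q (Prod.mk x ⁻¹' (E ∆ E')) := measure_union_le _ _
      _ = 0 := by
            simp only [Pi.zero_apply] at h1x
            rw [show (Prod.mk x ⁻¹' M : Set Y) = {y | (x, y) ∈ M} from rfl, hNx x h2x, h1x,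
              add_zero]
    have : Prod.mk x ⁻¹' F = {y | (x, y) ∈ F} := rfl
    rw [← this]
    have hsymm : (Prod.mk x ⁻¹' F) ∆ (Prod.mk x ⁻¹' E') = Prod.mk x ⁻¹' (F ∆ E') := by
      simp [Set.symmDiff_def, Set.preimage_union, Set.preimage_diff]
    exact measure_congr (measure_symmDiff_eq_zero_iff.mp (by rw [hsymm]; exact h0))
  -- y-sections: need a.e. y, P-section of E ∆ E' is null
  have hswap : ∀ᵐ y ∂Q, P {x | (x, y) ∈ E ∆ E'} = 0 := by
    set T := toMeasurable (P.prod Q) (E ∆ E') with hT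
    have hTm : MeasurableSet T := measurableSet_toMeasurable _ _
    have hTsub : E ∆ E' ⊆ T := subset_toMeasurable _ _
    have hT0 : (P.prod Q) T = 0 := by rw [hT, measure_toMeasurable]; exact hEE'0
    have hT0' : (Q.prod P) (Prod.swap ⁻¹' T) = 0 := by
      rw [← Measure.prod_swap, Measure.map_apply measurable_swap (measurable_swap hTm)]
      simpa [Set.preimage_preimage] using hT0
    have := Measure.measure_ae_null_of_prod_null hT0'
    filter_upwards [this] with y hy
    refine le_antisymm ?_ (zero_le)
    calc P {x | (x, y) ∈ E ∆ E'} ≤ P (Prod.mk y ⁻¹' (Prod.swap ⁻¹' T)) := by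
          apply measure_mono; intro x hx; exact hTsub hx
    _ = 0 := hy
  have hy : ∀ᵐ y ∂Q, P {x | (x, y) ∈ F} = P ((fun x => (x, y)) ⁻¹' E') := by
    have h2 : ∀ᵐ y ∂Q, y ∉ L := measure_eq_zero_iff_ae_notMem.mp hL0
    filter_upwards [hswap, h2] with y h1y h2y
    have hsub : {x | (x, y) ∈ F ∆ E'} ⊆ {x | (x, y) ∈ M} ∪ {x | (x, y) ∈ E ∆ E'} := by
      intro x hx
      rcases hFE' hx with h | h
      · exact Or.inl h
      · exact Or.inr h
    have h0 : P {x | (x, y) ∈ F ∆ E'} = 0 := by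
      refine le_antisymm ?_ (zero_le)
      calc P {x | (x, y) ∈ F ∆ E'} ≤ P ({x | (x, y) ∈ M} ∪ {x | (x, y) ∈ E ∆ E'}) :=
            measure_mono hsub
      _ ≤ P {x | (x, y) ∈ M} + P {x | (x, y) ∈ E ∆ E'} := measure_union_le _ _
      _ = 0 := by rw [hLy y h2y, h1y, add_zero]
    have hsymm : {x | (x, y) ∈ F} ∆ ((fun x => (x, y)) ⁻¹' E') = {x | (x, y) ∈ F ∆ E'} := by
      ext x
      simp [Set.symmDiff_def, symmDiff_def]
    exact measure_congr (measure_symmDiff_eq_zero_iff.mp (by rw [hsymm]; exact h0))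
  constructor
  · rw [lintegral_congr_ae hy, ← Measure.prod_apply_symm hE'm, hEeq]
  · rw [lintegral_congr_ae hx, ← Measure.prod_apply hE'm, hEeq]
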